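/- In every client equilibrium σ, every facility's load is at least the minimum neighborhood ratio: ℓ_j(σ) ≥ min over nonempty T ⊆ F of w(A(T))/|T|, for all facilities j. -/
import Mathlib


open Finset

/-- Load of facility `j` under weight distribution `σ`. -/
def load {n k : ℕ} (σ : Fin n → Fin k → ℝ) (j : Fin k) : ℝ := ∑ i, σ i j

/-- A feasible client weight distribution: nonnegative, supported on accessible
facilities, and clients with a nonempty accessible set distribute their full weight. -/
def Feasible {n k : ℕ} (w : Fin n → ℝ) (N : Fin n → Finset (Fin k))
    (σ : Fin n → Fin k → ℝ) : Prop :=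
  (∀ i j, 0 ≤ σ i j) ∧
  (∀ i j, j ∉ N i → σ i j = 0) ∧
  (∀ i, (N i).Nonempty → ∑ j ∈ N i, σ i j = w i)

/-- Client equilibrium: no client puts positive weight on a facility while a
strictly less loaded accessible facility exists. -/
def ClientEq {n k : ℕ} (w : Fin n → ℝ) (N : Fin n → Finset (Fin k))
    (σ : Fin n → Fin k → ℝ) : Prop :=
  Feasible w N σ ∧
  ∀ i : Fin n, ∀ j ∈ N i, ∀ j' ∈ N i, 0 < σ i j → load σ j ≤ load σ j'

/-- Total weight of the attraction set of a facility set `T`: clients having an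
accessible facility in `T`. -/
def wA {n k : ℕ} (w : Fin n → ℝ) (N : Fin n → Finset (Fin k))
    (T : Finset (Fin k)) : ℝ :=
  ∑ i ∈ Finset.univ.filter (fun i => (N i ∩ T).Nonempty), w i

/-- In every client equilibrium, every facility load is at least the minimum
neighborhood ratio. -/
theorem equilibrium_load_at_least_MNR (n k : ℕ)
    (w : Fin n → ℝ) (hw : ∀ i, 0 < w i) (N : Fin n → Finset (Fin k))
    (σ : Fin n → Fin k → ℝ) (heq : ClientEq w N σ) :
    ∀ j : Fin k,
      sInf {x : ℝ | ∃ T : Finset (Fin k), T.Nonempty ∧ x = wA w N T / (T.card : ℝ)}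
        ≤ load σ j := by
  intro j
  obtain ⟨⟨hpos, hsupp, hsum⟩, hstab⟩ := heq
  set T : Finset (Fin k) := univ.filter (fun j' => load σ j' ≤ load σ j) with hT
  have hjT : j ∈ T := by simp [hT]
  have hTne : T.Nonempty := ⟨j, hjT⟩
  have hTcard : (0 : ℝ) < T.card := by exact_mod_cast card_pos.mpr hTne
  -- set is bounded below by 0
  have hbdd : BddBelow {x : ℝ | ∃ T : Finset (Fin k), T.Nonempty ∧ x = wA w N T / (T.card : ℝ)} := by
    refine ⟨0, fun x hx => ?_⟩
    obtain ⟨S, hSne, rfl⟩ := hx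
    apply div_nonneg
    · exact Finset.sum_nonneg fun i _ => (hw i).le
    · positivity
  refine le_trans (csInf_le hbdd ⟨T, hTne, rfl⟩) ?_
  rw [div_le_iff₀ hTcard]
  -- key: for client i attracted to T, all its weight goes into T
  have key : ∀ i, (N i ∩ T).Nonempty → w i ≤ ∑ j' ∈ T, σ i j' := by
    intro i hi
    obtain ⟨jt, hjtmem⟩ := hi
    obtain ⟨hjtN, hjtT⟩ := mem_inter.mp hjtmem
    have hNne : (N i).Nonempty := ⟨jt, hjtN⟩
    have hjt' : load σ jt ≤ load σ j := (mem_filter.mp hjtT).2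
    have hzero : ∀ j'' ∈ N i, j'' ∉ T → σ i j'' = 0 := by
      intro j'' hj'' hj''T
      by_contra h
      have hpos' : 0 < σ i j'' := lt_of_le_of_ne (hpos i j'') (Ne.symm h)
      have := hstab i j'' hj'' jt hjtN hpos'
      exact hj''T (by simp only [hT, mem_filter, mem_univ, true_and]; linarith)
    have hw' : w i = ∑ j' ∈ N i ∩ T, σ i j' := by
      rw [← hsum i hNne]
      rw [← Finset.sum_filter_add_sum_filter_not (N i) (fun j' => j' ∈ T)]
      have h1 : ∑ j' ∈ (N i).filter (fun j' => j' ∉ T), σ i j' = 0 :=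
        Finset.sum_eq_zero fun j' hj' => hzero j' (mem_filter.mp hj').1 (mem_filter.mp hj').2
      rw [h1, add_zero, Finset.filter_mem_eq_inter]
    rw [hw']
    exact Finset.sum_le_sum_of_subset_of_nonneg (inter_subset_right)
      (fun j' _ _ => hpos i j')
  calc wA w N T ≤ ∑ i ∈ univ.filter (fun i => (N i ∩ T).Nonempty), ∑ j' ∈ T, σ i j' :=
        Finset.sum_le_sum fun i hi => key i (mem_filter.mp hi).2
    _ ≤ ∑ i, ∑ j' ∈ T, σ i j' :=
        Finset.sum_le_sum_of_subset_of_nonneg (filter_subset _ _)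
          (fun i _ _ => Finset.sum_nonneg fun j' _ => hpos i j')
    _ = ∑ j' ∈ T, load σ j' := Finset.sum_comm
    _ ≤ ∑ j' ∈ T, load σ j :=
        Finset.sum_le_sum fun j' hj' => (mem_filter.mp hj').2
    _ = load σ j * T.card := by rw [Finset.sum_const, nsmul_eq_mul, mul_comm]
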